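/- If (1, a_1, ..., a_r) is an M-vector and b_k := 1 + a_1 + ... + a_k, then b_k^{<k>} ≥ b_{k+1} for all 1 ≤ k ≤ r-1, where l^{<i>} denotes the i-th Macaulay pseudo-power of l. -/

import Mathlib

/-- The largest `n` with `C(n,i) ≤ l` (used in the greedy `i`-canonical
binomial representation). -/
noncomputable def macN (i l : ℕ) : ℕ := sSup {n : ℕ | Nat.choose n i ≤ l}

/-- The `i`-th Macaulay pseudo-power `l^{<i>}`, defined via the greedy
(`i`-canonical) binomial representation of `l`, with `0^{<i>} = 0`. -/
noncomputable def pseudoPow : ℕ → ℕ → ℕ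
  | 0, _ => 0
  | i + 1, l =>
    if l = 0 then 0
    else
      Nat.choose (macN (i + 1) l + 1) (i + 2) +
        pseudoPow i (l - Nat.choose (macN (i + 1) l) (i + 1))

lemma choose_ge_sub (n i : ℕ) (hi : 1 ≤ i) : n + 1 ≤ i + n.choose i := by
  induction n with
  | zero =>
    have := Nat.choose_eq_zero_of_lt (show 0 < i by omega)
    omega
  | succ n ih =>
    rcases lt_or_ge (n + 1) i with h | h
    · omega
    · have h2 : 1 ≤ n.choose (i - 1) := Nat.choose_pos (by omega)
      have h3 : (n + 1).choose i = n.choose (i - 1) + n.choose i := by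
        obtain ⟨j, rfl⟩ : ∃ j, i = j + 1 := ⟨i - 1, by omega⟩
        simp [Nat.choose_succ_succ]
      omega

lemma macN_bdd (i l : ℕ) (hi : 1 ≤ i) : BddAbove {n : ℕ | Nat.choose n i ≤ l} := by
  refine ⟨l + i, fun n hn => ?_⟩
  have h1 := choose_ge_sub n i hi
  have h2 : n.choose i ≤ l := hn
  omega

lemma macN_nonempty (i l : ℕ) (hi : 1 ≤ i) : {n : ℕ | Nat.choose n i ≤ l}.Nonempty :=
  ⟨0, by simp [Nat.choose_eq_zero_of_lt hi]⟩

lemma le_macN {i l n : ℕ} (hi : 1 ≤ i) (h : n.choose i ≤ l) : n ≤ macN i l :=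
  le_csSup (macN_bdd i l hi) h

lemma macN_choose_le (i l : ℕ) (hi : 1 ≤ i) : (macN i l).choose i ≤ l :=
  Nat.sSup_mem (macN_nonempty i l hi) (macN_bdd i l hi)

lemma lt_macN_succ (i l : ℕ) (hi : 1 ≤ i) : l < ((macN i l) + 1).choose i := by
  by_contra h
  push_neg at h
  have := le_macN hi h
  omega

lemma macN_eq {i x n : ℕ} (hi : 1 ≤ i) (h1 : n.choose i ≤ x) (h2 : x < (n + 1).choose i) :
    macN i x = n := by
  refine le_antisymm ?_ (le_macN hi h1)
  refine csSup_le (macN_nonempty i x hi) (fun s hs => ?_)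
  by_contra hh
  push_neg at hh
  have h3 : (n + 1).choose i ≤ s.choose i := Nat.choose_le_choose i (by omega)
  have h4 : s.choose i ≤ x := hs
  omega

lemma macN_one (x : ℕ) : macN 1 x = x :=
  macN_eq le_rfl (by simp) (by simp)

lemma pseudoPow_zero_right (k : ℕ) : pseudoPow k 0 = 0 := by
  cases k <;> simp [pseudoPow]

lemma pseudoPow_one (x : ℕ) : pseudoPow 1 x = (x + 1).choose 2 := by
  rcases Nat.eq_zero_or_pos x with rfl | hx
  · simp [pseudoPow]
  · show (if x = 0 then 0 else _) = _
    rw [if_neg (by omega), macN_one]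
    simp [pseudoPow]

lemma pseudoPow_succ (k x : ℕ) (hx : 1 ≤ x) :
    pseudoPow (k + 1) x =
      (macN (k + 1) x + 1).choose (k + 2) + pseudoPow k (x - (macN (k + 1) x).choose (k + 1)) := by
  show (if x = 0 then 0 else _) = _
  rw [if_neg (by omega)]

lemma le_pseudoPow : ∀ k x, x ≤ pseudoPow (k + 1) x := by
  intro k
  induction k with
  | zero =>
    intro x
    rw [pseudoPow_one]
    have : (x + 1).choose 2 = x.choose 1 + x.choose 2 := Nat.choose_succ_succ x 1
    simp at this
    omega
  | succ k ih =>
    intro x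
    rcases Nat.eq_zero_or_pos x with rfl | hx
    · simp [pseudoPow_zero_right]
    · rw [pseudoPow_succ _ _ hx]
      simp only [show k + 1 + 1 = k + 2 from rfl, show k + 1 + 2 = k + 3 from rfl]
      set n := macN (k + 2) x with hn
      have h1 : n.choose (k + 2) ≤ x := macN_choose_le (k + 2) x (by omega)
      have h2 : (n + 1).choose (k + 3) = n.choose (k + 2) + n.choose (k + 3) :=
        Nat.choose_succ_succ n (k + 2)
      have h3 := ih (x - n.choose (k + 2))
      omega

-- B' : strict upper bound on pseudoPow
lemma pseudoPow_lt : ∀ j N x : ℕ, j < N → x < N.choose j → pseudoPow j x < x + N.choose (j + 1) := by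
  intro j
  induction j with
  | zero =>
    intro N x hjN hx
    simp only [Nat.choose_zero_right] at hx
    interval_cases x
    simp [pseudoPow, Nat.choose_one_right]
    omega
  | succ j ih =>
    intro N x hjN hx
    have hNsame : N.choose (j + 1 + 1) = N.choose (j + 2) := rfl
    rcases Nat.eq_zero_or_pos x with rfl | hxpos
    · have : 0 < N.choose (j + 2) := Nat.choose_pos (by omega)
      simp [pseudoPow_zero_right]
      omega
    · set m := macN (j + 1) x with hm
      have hm1 : m.choose (j + 1) ≤ x := macN_choose_le (j + 1) x (by omega)
      have hm2 : x < (m + 1).choose (j + 1) := lt_macN_succ (j + 1) x (by omega)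
      have hmge : j + 1 ≤ m := le_macN (by omega) (by simp; omega)
      have hmN : m < N := by
        by_contra h
        push_neg at h
        have := Nat.choose_le_choose (j + 1) h
        omega
      have hpas : (m + 1).choose (j + 1) = m.choose j + m.choose (j + 1) :=
        Nat.choose_succ_succ m j
      have hrem : x - m.choose (j + 1) < m.choose j := by omega
      have hih := ih m (x - m.choose (j + 1)) (by omega) hrem
      rw [pseudoPow_succ _ _ hxpos, ← hm]
      have hpas2 : (m + 1).choose (j + 2) = m.choose (j + 1) + m.choose (j + 2) :=
        Nat.choose_succ_succ m (j + 1)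
      have hmono : (m + 1).choose (j + 2) ≤ N.choose (j + 2) := Nat.choose_le_choose _ (by omega)
      omega

-- E : lower bound
lemma pseudoPow_ge (j M x : ℕ) (hj : 1 ≤ j) (hjM : j ≤ M) (hx : M.choose j ≤ x) :
    x + M.choose (j + 1) ≤ pseudoPow j x := by
  have hxpos : 1 ≤ x := le_trans (Nat.choose_pos hjM) hx
  obtain ⟨i, rfl⟩ : ∃ i, j = i + 1 := ⟨j - 1, by omega⟩
  rcases Nat.eq_zero_or_pos i with rfl | hipos
  · -- j = 1
    rw [pseudoPow_one]
    have hMx : M ≤ x := by simpa using hx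
    have hpas : (x + 1).choose 2 = x.choose 1 + x.choose 2 := Nat.choose_succ_succ x 1
    have hmono : M.choose 2 ≤ x.choose 2 := Nat.choose_le_choose _ hMx
    have hx1 : x.choose 1 = x := Nat.choose_one_right x
    have hMsame : M.choose (0 + 1 + 1) = M.choose 2 := rfl
    omega
  · obtain ⟨n, rfl⟩ : ∃ n, i = n + 1 := ⟨i - 1, by omega⟩
    rw [pseudoPow_succ _ _ hxpos]
    simp only [show n + 1 + 1 = n + 2 from rfl, show n + 1 + 2 = n + 3 from rfl,
      show n + 1 + 1 + 1 = n + 3 from rfl]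
    have hq : M ≤ macN (n + 2) x := le_macN (by omega) hx
    set q := macN (n + 2) x with hqdef
    have hq1 : q.choose (n + 2) ≤ x := macN_choose_le (n + 2) x (by omega)
    have hpas : (q + 1).choose (n + 3) = q.choose (n + 2) + q.choose (n + 3) :=
      Nat.choose_succ_succ q (n + 2)
    have hmono : M.choose (n + 3) ≤ q.choose (n + 3) := Nat.choose_le_choose _ hq
    have hD := le_pseudoPow n (x - q.choose (n + 2))
    omega

lemma Sp : ∀ k c aa : ℕ, 1 ≤ c → (1 ≤ k → c + aa ≤ pseudoPow k c) →
    (c + aa) + pseudoPow (k + 1) aa ≤ pseudoPow (k + 1) (c + aa) := by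
  intro k
  induction k with
  | zero =>
    intro c aa hc _
    rw [pseudoPow_one, pseudoPow_one]
    have h1 : (c + aa + 1).choose 2 = (c + aa).choose 1 + (c + aa).choose 2 :=
      Nat.choose_succ_succ _ 1
    have h2 : (aa + 1).choose 2 ≤ (c + aa).choose 2 := Nat.choose_le_choose _ (by omega)
    have h3 : (c + aa).choose 1 = c + aa := Nat.choose_one_right _
    omega
  | succ k ih =>
    intro c aa hc hyp
    simp only [show k + 1 + 1 = k + 2 from rfl]
    have hyp' : c + aa ≤ pseudoPow (k + 1) c := hyp (by omega)
    rcases Nat.eq_zero_or_pos aa with rfl | hapos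
    · simpa [pseudoPow_zero_right] using le_pseudoPow (k + 1) c
    -- representation of aa at level k+2
    have hm1 : (macN (k + 2) aa).choose (k + 2) ≤ aa := macN_choose_le _ _ (by omega)
    have hm2 : aa < (macN (k + 2) aa + 1).choose (k + 2) := lt_macN_succ _ _ (by omega)
    have hmge : k + 2 ≤ macN (k + 2) aa := le_macN (by omega) (by simp; omega)
    have hPa : pseudoPow (k + 2) aa =
        (macN (k + 2) aa + 1).choose (k + 3) +
          pseudoPow (k + 1) (aa - (macN (k + 2) aa).choose (k + 2)) := by
      have := pseudoPow_succ (k + 1) aa hapos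
      simpa only [show k + 1 + 1 = k + 2 from rfl, show k + 1 + 2 = k + 3 from rfl] using this
    set m := macN (k + 2) aa with hmdef
    clear_value m
    set a2 := aa - m.choose (k + 2) with ha2def
    clear_value a2
    have haa : aa = m.choose (k + 2) + a2 := by omega
    have hpasm : (m + 1).choose (k + 2) = m.choose (k + 1) + m.choose (k + 2) :=
      Nat.choose_succ_succ m (k + 1)
    have ha2 : a2 < m.choose (k + 1) := by omega
    -- representation of c at level k+1
    have hp1 : (macN (k + 1) c).choose (k + 1) ≤ c := macN_choose_le _ _ (by omega)
    have hp2 : c < (macN (k + 1) c + 1).choose (k + 1) := lt_macN_succ _ _ (by omega)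
    have hpge : k + 1 ≤ macN (k + 1) c := le_macN (by omega) (by simpa using hc)
    have hPc : pseudoPow (k + 1) c =
        (macN (k + 1) c + 1).choose (k + 2) +
          pseudoPow k (c - (macN (k + 1) c).choose (k + 1)) :=
      pseudoPow_succ k c hc
    set p := macN (k + 1) c with hpdef
    clear_value p
    set c2 := c - p.choose (k + 1) with hc2def
    clear_value c2
    have hcc : c = p.choose (k + 1) + c2 := by omega
    have hpasp : (p + 1).choose (k + 1) = p.choose k + p.choose (k + 1) :=
      Nat.choose_succ_succ p k
    have hc2 : c2 < p.choose k := by omega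
    have hBc : pseudoPow k c2 < c2 + p.choose (k + 1) := pseudoPow_lt k p c2 (by omega) hc2
    have hpasP : (p + 1).choose (k + 2) = p.choose (k + 1) + p.choose (k + 2) :=
      Nat.choose_succ_succ p (k + 1)
    have hamax : aa < (p + 1).choose (k + 2) := by omega
    have hmp : m ≤ p := by
      by_contra h
      push_neg at h
      have := Nat.choose_le_choose (k + 2) (show p + 1 ≤ m by omega)
      omega
    by_cases hmp2 : m = p
    · subst hmp2
      have hsum : c + aa = (m + 1).choose (k + 2) + (c2 + a2) := by omega
      have hsum2 : c2 + a2 ≤ pseudoPow k c2 := by omega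
      have hlt2 : c + aa < (m + 2).choose (k + 2) := by
        have h : (m + 2).choose (k + 2) = (m + 1).choose (k + 1) + (m + 1).choose (k + 2) :=
          Nat.choose_succ_succ (m + 1) (k + 1)
        have h2 : (m + 1).choose (k + 1) = m.choose k + m.choose (k + 1) :=
          Nat.choose_succ_succ m k
        omega
      have hmac : macN (k + 2) (c + aa) = m + 1 := macN_eq (by omega) (by omega) hlt2
      have hPb : pseudoPow (k + 2) (c + aa) =
          (m + 2).choose (k + 3) + pseudoPow (k + 1) (c2 + a2) := by
        have h0 := pseudoPow_succ (k + 1) (c + aa) (by omega)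
        simp only [show k + 1 + 1 = k + 2 from rfl, show k + 1 + 2 = k + 3 from rfl] at h0
        rw [hmac] at h0
        have hre : c + aa - (m + 1).choose (k + 2) = c2 + a2 := by omega
        rw [hre] at h0
        simpa only [show m + 1 + 1 = m + 2 from rfl] using h0
      have hinner : (c2 + a2) + pseudoPow (k + 1) a2 ≤ pseudoPow (k + 1) (c2 + a2) := by
        rcases Nat.eq_zero_or_pos c2 with rfl | hc2pos
        · have ha0 : a2 = 0 := by
            have := pseudoPow_zero_right k
            omega
          simp [ha0, pseudoPow_zero_right]
        · exact ih c2 a2 hc2pos (fun _ => hsum2)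
      have hpasBig : (m + 2).choose (k + 3) = (m + 1).choose (k + 2) + (m + 1).choose (k + 3) :=
        Nat.choose_succ_succ (m + 1) (k + 2)
      omega
    · -- m < p
      have hmplt : m < p := by omega
      have hcm : (m + 1).choose (k + 1) ≤ c :=
        le_trans (Nat.choose_le_choose _ (by omega : m + 1 ≤ p)) hp1
      have hpm1 : (m + 1).choose (k + 1) = m.choose k + m.choose (k + 1) :=
        Nat.choose_succ_succ m k
      have hkm : 0 < m.choose k := Nat.choose_pos (by omega)
      have hblow : (m + 1).choose (k + 2) ≤ c + aa := by omega
      by_cases hbig : c + aa < (m + 2).choose (k + 2)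
      · have hmacb : macN (k + 2) (c + aa) = m + 1 := macN_eq (by omega) hblow hbig
        set d := c - m.choose (k + 1) with hddef
        have hd : c = m.choose (k + 1) + d := by omega
        have hdk : m.choose k ≤ d := by omega
        have hsum : c + aa = (m + 1).choose (k + 2) + (d + a2) := by omega
        have hPb : pseudoPow (k + 2) (c + aa) =
            (m + 2).choose (k + 3) + pseudoPow (k + 1) (d + a2) := by
          have h0 := pseudoPow_succ (k + 1) (c + aa) (by omega)
          simp only [show k + 1 + 1 = k + 2 from rfl, show k + 1 + 2 = k + 3 from rfl] at h0
          rw [hmacb] at h0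
          have hre : c + aa - (m + 1).choose (k + 2) = d + a2 := by omega
          rw [hre] at h0
          simpa only [show m + 1 + 1 = m + 2 from rfl] using h0
        have hhyp : 1 ≤ k → d + a2 ≤ pseudoPow k d := by
          intro hk
          have := pseudoPow_ge k m d hk (by omega) hdk
          omega
        have hinner := ih d a2 (by omega) hhyp
        have hpasBig : (m + 2).choose (k + 3) = (m + 1).choose (k + 2) + (m + 1).choose (k + 3) :=
          Nat.choose_succ_succ (m + 1) (k + 2)
        omega
      · push_neg at hbig
        have hn : m + 2 ≤ macN (k + 2) (c + aa) := le_macN (by omega) hbig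
        have hn1 : (macN (k + 2) (c + aa)).choose (k + 2) ≤ c + aa :=
          macN_choose_le (k + 2) (c + aa) (by omega)
        have hPb : pseudoPow (k + 2) (c + aa) =
            (macN (k + 2) (c + aa) + 1).choose (k + 3) +
              pseudoPow (k + 1) (c + aa - (macN (k + 2) (c + aa)).choose (k + 2)) := by
          have h0 := pseudoPow_succ (k + 1) (c + aa) (by omega)
          simpa only [show k + 1 + 1 = k + 2 from rfl, show k + 1 + 2 = k + 3 from rfl] using h0
        set n := macN (k + 2) (c + aa) with hndef
        have hD := le_pseudoPow k (c + aa - n.choose (k + 2))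
        have hpasn : (n + 1).choose (k + 3) = n.choose (k + 2) + n.choose (k + 3) :=
          Nat.choose_succ_succ n (k + 2)
        have hmonon : (m + 2).choose (k + 3) ≤ n.choose (k + 3) :=
          Nat.choose_le_choose _ (by omega)
        have hBa : pseudoPow (k + 2) aa < aa + (m + 1).choose (k + 3) := by
          have := pseudoPow_lt (k + 2) (m + 1) aa (by omega) hm2
          simpa only [show k + 2 + 1 = k + 3 from rfl] using this
        have hpasBig : (m + 2).choose (k + 3) = (m + 1).choose (k + 2) + (m + 1).choose (k + 3) :=
          Nat.choose_succ_succ (m + 1) (k + 2)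
        omega


/-- If `(1, a_1, …, a_r)` is an M-vector and `b_k = 1 + a_1 + ⋯ + a_k`,
then `b_k^{<k>} ≥ b_{k+1}` for `1 ≤ k ≤ r - 1`. -/
theorem stmt0 (r : ℕ) (a : ℕ → ℕ) (ha0 : a 0 = 1)
    (hM : ∀ i, 1 ≤ i → i + 1 ≤ r → a (i + 1) ≤ pseudoPow i (a i))
    (b : ℕ → ℕ) (hb : ∀ k, b k = ∑ j ∈ Finset.range (k + 1), a j) :
    ∀ k, 1 ≤ k → k ≤ r - 1 → b (k + 1) ≤ pseudoPow k (b k) := by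
  have hbpos : ∀ k, 1 ≤ b k := by
    intro k
    rw [hb]
    have h0 : a 0 ≤ ∑ j ∈ Finset.range (k + 1), a j :=
      Finset.single_le_sum (fun i _ => Nat.zero_le _) (Finset.mem_range.2 (by omega))
    omega
  have hstep : ∀ k, b (k + 1) = b k + a (k + 1) := by
    intro k
    rw [hb, hb, Finset.sum_range_succ]
  have key : ∀ k, 1 ≤ k → k + 1 ≤ r → b (k + 1) ≤ pseudoPow k (b k) := by
    intro k
    induction k with
    | zero => omega
    | succ n ih =>
      intro _ hkr
      simp only [show n + 1 + 1 = n + 2 from rfl]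
      have h1 : b (n + 2) = b (n + 1) + a (n + 2) := hstep (n + 1)
      have h2 : a (n + 2) ≤ pseudoPow (n + 1) (a (n + 1)) := hM (n + 1) (by omega) hkr
      have h3 : b (n + 1) = b n + a (n + 1) := hstep n
      have h4 : 1 ≤ n → b n + a (n + 1) ≤ pseudoPow n (b n) := by
        intro hn
        rw [← h3]
        have := ih hn (by omega)
        rw [h3] at this ⊢
        exact this
      have h5 := Sp n (b n) (a (n + 1)) (hbpos n) (fun hn => h4 hn)
      rw [← h3] at h5
      omega
  intro k hk1 hk2
  exact key k hk1 (by omega)
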